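/- For the Freund bivariate distribution, Cov(X,Y) = (β₁β₂ − α₁α₂) / (β₁β₂(α₁+α₂)²). -/

import Mathlib

open MeasureTheory Real

/-- The Freund bivariate mixture exponential density. -/
noncomputable def freund (a1 b1 a2 b2 : ℝ) (x y : ℝ) : ℝ :=
  if 0 < x ∧ x < y then a1 * b2 * Real.exp (-b2 * y - (a1 + a2 - b2) * x)
  else if 0 < y ∧ y < x then a2 * b1 * Real.exp (-b1 * x - (a1 + a2 - b1) * y)
  else 0

/-- Expectation of `φ(x,y)` under the Freund density. -/
noncomputable def freundE (a1 b1 a2 b2 : ℝ) (φ : ℝ → ℝ → ℝ) : ℝ :=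
  ∫ x in Set.Ioi (0:ℝ), ∫ y in Set.Ioi (0:ℝ), φ x y * freund a1 b1 a2 b2 x y

namespace FreundAux

open Set Filter

lemma tendsto_pow_exp (n : ℕ) {k : ℝ} (hk : 0 < k) :
    Tendsto (fun x : ℝ => x ^ n * Real.exp (-(k * x))) atTop (nhds 0) := by
  have h := Real.tendsto_pow_mul_exp_neg_atTop_nhds_zero n
  have h2 : Tendsto (fun x : ℝ => k * x) atTop atTop :=
    Tendsto.const_mul_atTop hk tendsto_id
  have h3 := (h.comp h2).const_mul (1 / k ^ n)
  rw [mul_zero] at h3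
  refine h3.congr fun x => ?_
  simp only [Function.comp_apply, mul_pow]
  field_simp

lemma tendsto_poly_exp {k : ℝ} (hk : 0 < k) (c0 c1 c2 c3 : ℝ) :
    Tendsto (fun x : ℝ => (c0 + c1 * x + c2 * x ^ 2 + c3 * x ^ 3) * Real.exp (-(k * x)))
      atTop (nhds 0) := by
  have h0 := (tendsto_pow_exp 0 hk).const_mul c0
  have h1 := (tendsto_pow_exp 1 hk).const_mul c1
  have h2 := (tendsto_pow_exp 2 hk).const_mul c2
  have h3 := (tendsto_pow_exp 3 hk).const_mul c3
  have H := ((h0.add h1).add h2).add h3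
  simp only [mul_zero, add_zero] at H
  refine H.congr fun x => ?_
  ring

lemma cubic_exp_hasDeriv (k c0 c1 c2 c3 q0 q1 q2 q3 : ℝ)
    (h3 : k * q3 = c3) (h2 : k * q2 = c2 + 3 * q3)
    (h1 : k * q1 = c1 + 2 * q2) (h0 : k * q0 = c0 + q1) (y : ℝ) :
    HasDerivAt (fun y : ℝ => -((q0 + q1 * y + q2 * y ^ 2 + q3 * y ^ 3) * Real.exp (-(k * y))))
      ((c0 + c1 * y + c2 * y ^ 2 + c3 * y ^ 3) * Real.exp (-(k * y))) y := by
  have hpoly : HasDerivAt (fun y : ℝ => q0 + q1 * y + q2 * y ^ 2 + q3 * y ^ 3)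
      (q1 + 2 * q2 * y + 3 * q3 * y ^ 2) y := by
    have h := (((hasDerivAt_const y q0).add ((hasDerivAt_id y).const_mul q1)).add
        ((hasDerivAt_pow 2 y).const_mul q2)).add ((hasDerivAt_pow 3 y).const_mul q3)
    refine h.congr_deriv ?_
    push_cast
    ring
  have hexp : HasDerivAt (fun y : ℝ => Real.exp (-(k * y))) (Real.exp (-(k * y)) * (-k)) y := by
    have h : HasDerivAt (fun y : ℝ => -(k * y)) (-k) y := by
      exact ((hasDerivAt_id y).const_mul k).neg.congr_deriv (by ring)
    exact h.exp
  have h := (hpoly.mul hexp).neg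
  refine h.congr_deriv ?_
  have hC : c0 + c1 * y + c2 * y ^ 2 + c3 * y ^ 3
      = k * (q0 + q1 * y + q2 * y ^ 2 + q3 * y ^ 3) - (q1 + 2 * q2 * y + 3 * q3 * y ^ 2) := by
    linear_combination (-1 : ℝ) * h0 + (-y) * h1 + (-y^2) * h2 + (-y^3) * h3
  rw [hC]; ring

lemma exp_cubic_int {k t : ℝ} (hk : 0 < k) (ht : 0 ≤ t) (c0 c1 c2 c3 q0 q1 q2 q3 : ℝ)
    (hc0 : 0 ≤ c0) (hc1 : 0 ≤ c1) (hc2 : 0 ≤ c2) (hc3 : 0 ≤ c3)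
    (h3 : k * q3 = c3) (h2 : k * q2 = c2 + 3 * q3)
    (h1 : k * q1 = c1 + 2 * q2) (h0 : k * q0 = c0 + q1) :
    IntegrableOn (fun y => (c0 + c1 * y + c2 * y ^ 2 + c3 * y ^ 3) * Real.exp (-(k * y)))
      (Set.Ioi t) volume ∧
    ∫ y in Set.Ioi t, (c0 + c1 * y + c2 * y ^ 2 + c3 * y ^ 3) * Real.exp (-(k * y))
      = (q0 + q1 * t + q2 * t ^ 2 + q3 * t ^ 3) * Real.exp (-(k * t)) := by
  have key := fun y => cubic_exp_hasDeriv k c0 c1 c2 c3 q0 q1 q2 q3 h3 h2 h1 h0 y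
  have hpos : ∀ y ∈ Set.Ioi t, 0 ≤ (c0 + c1 * y + c2 * y ^ 2 + c3 * y ^ 3) * Real.exp (-(k * y)) := by
    intro y hy
    have hy0 : 0 ≤ y := le_of_lt (lt_of_le_of_lt ht hy)
    exact mul_nonneg (by positivity) (Real.exp_pos _).le
  have hlim : Tendsto (fun y : ℝ => -((q0 + q1 * y + q2 * y ^ 2 + q3 * y ^ 3) * Real.exp (-(k * y))))
      atTop (nhds 0) := by
    simpa using (tendsto_poly_exp hk q0 q1 q2 q3).neg
  refine ⟨integrableOn_Ioi_deriv_of_nonneg' (fun y _ => key y) hpos hlim, ?_⟩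
  rw [integral_Ioi_of_hasDerivAt_of_nonneg' (fun y _ => key y) hpos hlim]
  simp

lemma int_exp {k t : ℝ} (hk : 0 < k) (ht : 0 ≤ t) :
    IntegrableOn (fun y => Real.exp (-(k * y))) (Set.Ioi t) volume ∧
    ∫ y in Set.Ioi t, Real.exp (-(k * y)) = (1 / k) * Real.exp (-(k * t)) := by
  obtain ⟨hi, hv⟩ := exp_cubic_int hk ht 1 0 0 0 (1/k) 0 0 0 zero_le_one le_rfl le_rfl le_rfl
    (by ring) (by ring) (by ring) (by field_simp; ring)
  refine ⟨hi.congr_fun (fun y _ => by ring) measurableSet_Ioi, ?_⟩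
  have h : ∫ y in Set.Ioi t, Real.exp (-(k * y))
      = ∫ y in Set.Ioi t, (1 + 0 * y + 0 * y ^ 2 + 0 * y ^ 3) * Real.exp (-(k * y)) :=
    setIntegral_congr_fun measurableSet_Ioi (fun y _ => by ring)
  rw [h, hv]; ring

lemma int_x_exp {k t : ℝ} (hk : 0 < k) (ht : 0 ≤ t) :
    IntegrableOn (fun y => y * Real.exp (-(k * y))) (Set.Ioi t) volume ∧
    ∫ y in Set.Ioi t, y * Real.exp (-(k * y)) = (1 / k ^ 2 + t / k) * Real.exp (-(k * t)) := by
  obtain ⟨hi, hv⟩ := exp_cubic_int hk ht 0 1 0 0 (1/k^2) (1/k) 0 0 le_rfl zero_le_one le_rfl le_rfl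
    (by ring) (by ring) (by field_simp; ring) (by field_simp; ring)
  refine ⟨hi.congr_fun (fun y _ => by ring) measurableSet_Ioi, ?_⟩
  have h : ∫ y in Set.Ioi t, y * Real.exp (-(k * y))
      = ∫ y in Set.Ioi t, (0 + 1 * y + 0 * y ^ 2 + 0 * y ^ 3) * Real.exp (-(k * y)) :=
    setIntegral_congr_fun measurableSet_Ioi (fun y _ => by ring)
  rw [h, hv]; ring

lemma int_x2_exp {k t : ℝ} (hk : 0 < k) (ht : 0 ≤ t) :
    IntegrableOn (fun y => y ^ 2 * Real.exp (-(k * y))) (Set.Ioi t) volume ∧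
    ∫ y in Set.Ioi t, y ^ 2 * Real.exp (-(k * y))
      = (2 / k ^ 3 + 2 * t / k ^ 2 + t ^ 2 / k) * Real.exp (-(k * t)) := by
  obtain ⟨hi, hv⟩ := exp_cubic_int hk ht 0 0 1 0 (2/k^3) (2/k^2) (1/k) 0 le_rfl le_rfl zero_le_one
    le_rfl (by ring) (by field_simp; ring) (by field_simp; ring) (by field_simp; ring)
  refine ⟨hi.congr_fun (fun y _ => by ring) measurableSet_Ioi, ?_⟩
  have h : ∫ y in Set.Ioi t, y ^ 2 * Real.exp (-(k * y))
      = ∫ y in Set.Ioi t, (0 + 0 * y + 1 * y ^ 2 + 0 * y ^ 3) * Real.exp (-(k * y)) :=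
    setIntegral_congr_fun measurableSet_Ioi (fun y _ => by ring)
  rw [h, hv]; ring

lemma int_x3_exp {k t : ℝ} (hk : 0 < k) (ht : 0 ≤ t) :
    IntegrableOn (fun y => y ^ 3 * Real.exp (-(k * y))) (Set.Ioi t) volume ∧
    ∫ y in Set.Ioi t, y ^ 3 * Real.exp (-(k * y))
      = (6 / k ^ 4 + 6 * t / k ^ 3 + 3 * t ^ 2 / k ^ 2 + t ^ 3 / k) * Real.exp (-(k * t)) := by
  obtain ⟨hi, hv⟩ := exp_cubic_int hk ht 0 0 0 1 (6/k^4) (6/k^3) (3/k^2) (1/k) le_rfl le_rfl le_rfl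
    zero_le_one (by field_simp) (by field_simp; ring) (by field_simp; ring) (by field_simp; ring)
  refine ⟨hi.congr_fun (fun y _ => by ring) measurableSet_Ioi, ?_⟩
  have h : ∫ y in Set.Ioi t, y ^ 3 * Real.exp (-(k * y))
      = ∫ y in Set.Ioi t, (0 + 0 * y + 0 * y ^ 2 + 1 * y ^ 3) * Real.exp (-(k * y)) :=
    setIntegral_congr_fun measurableSet_Ioi (fun y _ => by ring)
  rw [h, hv]; ring

lemma exp_cubic_ftc (k c0 c1 c2 c3 q0 q1 q2 q3 : ℝ)
    (h3 : k * q3 = c3) (h2 : k * q2 = c2 + 3 * q3)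
    (h1 : k * q1 = c1 + 2 * q2) (h0 : k * q0 = c0 + q1) (x : ℝ) :
    ∫ y in (0:ℝ)..x, (c0 + c1 * y + c2 * y ^ 2 + c3 * y ^ 3) * Real.exp (-(k * y))
      = q0 - (q0 + q1 * x + q2 * x ^ 2 + q3 * x ^ 3) * Real.exp (-(k * x)) := by
  have key := fun y => cubic_exp_hasDeriv k c0 c1 c2 c3 q0 q1 q2 q3 h3 h2 h1 h0 y
  rw [intervalIntegral.integral_eq_sub_of_hasDerivAt (fun y _ => key y)
    ((Continuous.intervalIntegrable (by continuity) _ _))]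
  simp [Real.exp_zero]
  ring

lemma K0 {c : ℝ} (hc : c ≠ 0) (x : ℝ) :
    ∫ y in (0:ℝ)..x, Real.exp (-(c * y)) = 1 / c - (1 / c) * Real.exp (-(c * x)) := by
  have h : ∫ y in (0:ℝ)..x, Real.exp (-(c * y))
      = ∫ y in (0:ℝ)..x, (1 + 0 * y + 0 * y ^ 2 + 0 * y ^ 3) * Real.exp (-(c * y)) :=
    intervalIntegral.integral_congr (fun y _ => by ring)
  rw [h, exp_cubic_ftc c 1 0 0 0 (1/c) 0 0 0 (by ring) (by ring) (by ring) (by field_simp; ring)]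
  ring

lemma K1 {c : ℝ} (hc : c ≠ 0) (x : ℝ) :
    ∫ y in (0:ℝ)..x, y * Real.exp (-(c * y))
      = 1 / c ^ 2 - (1 / c ^ 2 + (1 / c) * x) * Real.exp (-(c * x)) := by
  have h : ∫ y in (0:ℝ)..x, y * Real.exp (-(c * y))
      = ∫ y in (0:ℝ)..x, (0 + 1 * y + 0 * y ^ 2 + 0 * y ^ 3) * Real.exp (-(c * y)) :=
    intervalIntegral.integral_congr (fun y _ => by ring)
  rw [h, exp_cubic_ftc c 0 1 0 0 (1/c^2) (1/c) 0 0 (by ring) (by ring) (by field_simp; ring)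
    (by field_simp; ring)]
  ring

end FreundAux

open FreundAux Set

section Split

variable {a1 b1 a2 b2 : ℝ}

lemma inner_split (a1 b1 a2 b2 : ℝ) {x : ℝ} (hx : 0 < x) (ψ : ℝ → ℝ) (hψ : Continuous ψ)
    (hI1 : IntegrableOn (fun y => ψ y * Real.exp (-(b2 * y))) (Set.Ioi x) volume) :
    ∫ y in Set.Ioi (0:ℝ), ψ y * freund a1 b1 a2 b2 x y
      = a2 * b1 * Real.exp (-(b1 * x)) * (∫ y in (0:ℝ)..x, ψ y * Real.exp (-((a1 + a2 - b1) * y)))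
      + a1 * b2 * Real.exp (-((a1 + a2 - b2) * x))
          * (∫ y in Set.Ioi x, ψ y * Real.exp (-(b2 * y))) := by
  have hsplit : Set.Ioi (0:ℝ) = Set.Ioc 0 x ∪ Set.Ioi x := (Set.Ioc_union_Ioi_eq_Ioi hx.le).symm
  have hEq2 : Set.EqOn (fun y => (a2 * b1 * Real.exp (-(b1 * x)))
        * (ψ y * Real.exp (-((a1 + a2 - b1) * y))))
      (fun y => ψ y * freund a1 b1 a2 b2 x y) (Set.Ioo 0 x) := by
    intro y hy
    simp only [freund]
    rw [if_neg (fun h => absurd h.2 (not_lt.2 hy.2.le)), if_pos ⟨hy.1, hy.2⟩]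
    rw [show -b1 * x - (a1 + a2 - b1) * y = -(b1 * x) + -((a1 + a2 - b1) * y) by ring,
      Real.exp_add]
    ring
  have hEq1 : Set.EqOn (fun y => (a1 * b2 * Real.exp (-((a1 + a2 - b2) * x)))
        * (ψ y * Real.exp (-(b2 * y))))
      (fun y => ψ y * freund a1 b1 a2 b2 x y) (Set.Ioi x) := by
    intro y hy
    simp only [freund]
    rw [if_pos ⟨hx, hy⟩]
    rw [show -b2 * y - (a1 + a2 - b2) * x = -((a1 + a2 - b2) * x) + -(b2 * y) by ring,
      Real.exp_add]
    ring
  have hIoc : IntegrableOn (fun y => ψ y * freund a1 b1 a2 b2 x y) (Set.Ioc 0 x) volume := by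
    rw [integrableOn_Ioc_iff_integrableOn_Ioo]
    have hcont : Continuous (fun y => (a2 * b1 * Real.exp (-(b1 * x)))
        * (ψ y * Real.exp (-((a1 + a2 - b1) * y)))) := by continuity
    exact ((hcont.integrableOn_Ioc.mono_set Set.Ioo_subset_Ioc_self)).congr_fun hEq2
      measurableSet_Ioo
  have hIoi : IntegrableOn (fun y => ψ y * freund a1 b1 a2 b2 x y) (Set.Ioi x) volume := by
    have hcm : IntegrableOn (fun y => (a1 * b2 * Real.exp (-((a1 + a2 - b2) * x)))
        * (ψ y * Real.exp (-(b2 * y)))) (Set.Ioi x) volume :=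
      hI1.const_mul (a1 * b2 * Real.exp (-((a1 + a2 - b2) * x)))
    exact hcm.congr_fun hEq1 measurableSet_Ioi
  rw [hsplit, setIntegral_union (Set.Ioc_disjoint_Ioi le_rfl) measurableSet_Ioi hIoc hIoi]
  congr 1
  · rw [MeasureTheory.integral_Ioc_eq_integral_Ioo,
      ← setIntegral_congr_fun measurableSet_Ioo hEq2, MeasureTheory.integral_const_mul,
      intervalIntegral.integral_of_le hx.le, MeasureTheory.integral_Ioc_eq_integral_Ioo]
  · rw [← setIntegral_congr_fun measurableSet_Ioi hEq1, MeasureTheory.integral_const_mul]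

lemma inner_split0 (a1 b1 a2 b2 : ℝ) (hb2 : 0 < b2) {x : ℝ} (hx : 0 < x) :
    ∫ y in Set.Ioi (0:ℝ), freund a1 b1 a2 b2 x y
      = a2 * b1 * Real.exp (-(b1 * x)) * (∫ y in (0:ℝ)..x, Real.exp (-((a1 + a2 - b1) * y)))
      + a1 * b2 * Real.exp (-((a1 + a2 - b2) * x))
          * (∫ y in Set.Ioi x, Real.exp (-(b2 * y))) := by
  have h := inner_split a1 b1 a2 b2 hx (fun _ => (1:ℝ)) continuous_const
    (by simpa using (int_exp hb2 hx.le).1)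
  simpa using h

lemma inner_split1 (a1 b1 a2 b2 : ℝ) (hb2 : 0 < b2) {x : ℝ} (hx : 0 < x) :
    ∫ y in Set.Ioi (0:ℝ), y * freund a1 b1 a2 b2 x y
      = a2 * b1 * Real.exp (-(b1 * x)) * (∫ y in (0:ℝ)..x, y * Real.exp (-((a1 + a2 - b1) * y)))
      + a1 * b2 * Real.exp (-((a1 + a2 - b2) * x))
          * (∫ y in Set.Ioi x, y * Real.exp (-(b2 * y))) := by
  have h := inner_split a1 b1 a2 b2 hx (fun y => y) continuous_id
    ((int_x_exp hb2 hx.le).1)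
  simpa using h

end Split


section Outer

variable {a1 b1 a2 b2 : ℝ}

lemma exp_combine (u v x : ℝ) :
    Real.exp (-(u * x)) * Real.exp (-(v * x)) = Real.exp (-((u + v) * x)) := by
  rw [← Real.exp_add]; congr 1; ring

lemma Bfull10 (ha1 : 0 < a1) (hb1 : 0 < b1) (ha2 : 0 < a2) :
    IntegrableOn (fun x => x * (a2 * b1 * Real.exp (-(b1 * x))
        * ∫ y in (0:ℝ)..x, Real.exp (-((a1 + a2 - b1) * y)))) (Set.Ioi 0) volume ∧
    ∫ x in Set.Ioi (0:ℝ), x * (a2 * b1 * Real.exp (-(b1 * x))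
        * ∫ y in (0:ℝ)..x, Real.exp (-((a1 + a2 - b1) * y)))
      = a2 / (a1 + a2) ^ 2 + a2 / (b1 * (a1 + a2)) := by
  have hs : 0 < a1 + a2 := by linarith
  rcases eq_or_ne (a1 + a2 - b1) 0 with hc | hc
  · have hb : a1 + a2 = b1 := by linarith
    have hfun : (fun x => x * (a2 * b1 * Real.exp (-(b1 * x))
          * ∫ y in (0:ℝ)..x, Real.exp (-((a1 + a2 - b1) * y))))
        = fun x => (a2 * b1) * (x ^ 2 * Real.exp (-(b1 * x))) := by
      funext x
      rw [hc]
      simp only [zero_mul, neg_zero, Real.exp_zero]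
      rw [integral_one]
      ring
    rw [hfun]
    obtain ⟨hi, hv⟩ := int_x2_exp hb1 (le_refl (0:ℝ))
    refine ⟨hi.const_mul _, ?_⟩
    rw [MeasureTheory.integral_const_mul, hv, ← hb]
    simp only [mul_zero, neg_zero, Real.exp_zero]
    field_simp
    ring
  · have hfun : (fun x => x * (a2 * b1 * Real.exp (-(b1 * x))
          * ∫ y in (0:ℝ)..x, Real.exp (-((a1 + a2 - b1) * y))))
        = fun x => (a2 * b1 / (a1 + a2 - b1)) * (x * Real.exp (-(b1 * x)))
            - (a2 * b1 / (a1 + a2 - b1)) * (x * Real.exp (-((a1 + a2) * x))) := by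
      funext x
      have hE : Real.exp (-(b1 * x)) * Real.exp (-((a1 + a2 - b1) * x))
          = Real.exp (-((a1 + a2) * x)) := by
        rw [exp_combine]; ring_nf
      rw [K0 hc x, ← hE]
      field_simp
    rw [hfun]
    obtain ⟨hi1, hv1⟩ := int_x_exp hb1 (le_refl (0:ℝ))
    obtain ⟨hi2, hv2⟩ := int_x_exp hs (le_refl (0:ℝ))
    refine ⟨(hi1.const_mul _).sub (hi2.const_mul _), ?_⟩
    rw [MeasureTheory.integral_sub (hi1.const_mul _) (hi2.const_mul _),
      MeasureTheory.integral_const_mul, MeasureTheory.integral_const_mul, hv1, hv2]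
    simp only [mul_zero, neg_zero, Real.exp_zero, zero_div, add_zero, mul_one]
    field_simp
    ring

lemma Bfull01 (ha1 : 0 < a1) (hb1 : 0 < b1) (ha2 : 0 < a2) :
    IntegrableOn (fun x => a2 * b1 * Real.exp (-(b1 * x))
        * ∫ y in (0:ℝ)..x, y * Real.exp (-((a1 + a2 - b1) * y))) (Set.Ioi 0) volume ∧
    ∫ x in Set.Ioi (0:ℝ), a2 * b1 * Real.exp (-(b1 * x))
        * ∫ y in (0:ℝ)..x, y * Real.exp (-((a1 + a2 - b1) * y))
      = a2 / (a1 + a2) ^ 2 := by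
  have hs : 0 < a1 + a2 := by linarith
  rcases eq_or_ne (a1 + a2 - b1) 0 with hc | hc
  · have hb : a1 + a2 = b1 := by linarith
    have hfun : (fun x => a2 * b1 * Real.exp (-(b1 * x))
          * ∫ y in (0:ℝ)..x, y * Real.exp (-((a1 + a2 - b1) * y)))
        = fun x => (a2 * b1 / 2) * (x ^ 2 * Real.exp (-(b1 * x))) := by
      funext x
      rw [hc]
      simp only [zero_mul, neg_zero, Real.exp_zero, mul_one]
      rw [integral_id]
      ring
    rw [hfun]
    obtain ⟨hi, hv⟩ := int_x2_exp hb1 (le_refl (0:ℝ))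
    refine ⟨hi.const_mul _, ?_⟩
    rw [MeasureTheory.integral_const_mul, hv, ← hb]
    simp only [mul_zero, neg_zero, Real.exp_zero]
    field_simp
    ring
  · have hfun : (fun x => a2 * b1 * Real.exp (-(b1 * x))
          * ∫ y in (0:ℝ)..x, y * Real.exp (-((a1 + a2 - b1) * y)))
        = fun x => (a2 * b1 / (a1 + a2 - b1) ^ 2) * Real.exp (-(b1 * x))
            - ((a2 * b1 / (a1 + a2 - b1) ^ 2) * Real.exp (-((a1 + a2) * x))
              + (a2 * b1 / (a1 + a2 - b1)) * (x * Real.exp (-((a1 + a2) * x)))) := by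
      funext x
      have hE : Real.exp (-(b1 * x)) * Real.exp (-((a1 + a2 - b1) * x))
          = Real.exp (-((a1 + a2) * x)) := by
        rw [exp_combine]; ring_nf
      rw [K1 hc x, ← hE]
      field_simp
    rw [hfun]
    obtain ⟨hi1, hv1⟩ := int_exp hb1 (le_refl (0:ℝ))
    obtain ⟨hi2, hv2⟩ := int_exp hs (le_refl (0:ℝ))
    obtain ⟨hi3, hv3⟩ := int_x_exp hs (le_refl (0:ℝ))
    have h2 : IntegrableOn (fun x => (a2 * b1 / (a1 + a2 - b1) ^ 2)
        * Real.exp (-((a1 + a2) * x))) (Set.Ioi 0) volume := hi2.const_mul _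
    have h3 : IntegrableOn (fun x => (a2 * b1 / (a1 + a2 - b1))
        * (x * Real.exp (-((a1 + a2) * x)))) (Set.Ioi 0) volume := hi3.const_mul _
    have h23 : IntegrableOn (fun x => (a2 * b1 / (a1 + a2 - b1) ^ 2)
          * Real.exp (-((a1 + a2) * x))
        + (a2 * b1 / (a1 + a2 - b1)) * (x * Real.exp (-((a1 + a2) * x))))
        (Set.Ioi 0) volume := h2.add h3
    refine ⟨(hi1.const_mul _).sub h23, ?_⟩
    rw [MeasureTheory.integral_sub (hi1.const_mul _) h23,
      MeasureTheory.integral_add h2 h3,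
      MeasureTheory.integral_const_mul, MeasureTheory.integral_const_mul,
      MeasureTheory.integral_const_mul, hv1, hv2, hv3]
    simp only [mul_zero, neg_zero, Real.exp_zero, zero_div, add_zero, mul_one]
    field_simp
    ring

lemma Bfull11 (ha1 : 0 < a1) (hb1 : 0 < b1) (ha2 : 0 < a2) :
    IntegrableOn (fun x => x * (a2 * b1 * Real.exp (-(b1 * x))
        * ∫ y in (0:ℝ)..x, y * Real.exp (-((a1 + a2 - b1) * y)))) (Set.Ioi 0) volume ∧
    ∫ x in Set.Ioi (0:ℝ), x * (a2 * b1 * Real.exp (-(b1 * x))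
        * ∫ y in (0:ℝ)..x, y * Real.exp (-((a1 + a2 - b1) * y)))
      = 2 * a2 / (a1 + a2) ^ 3 + a2 / (b1 * (a1 + a2) ^ 2) := by
  have hs : 0 < a1 + a2 := by linarith
  rcases eq_or_ne (a1 + a2 - b1) 0 with hc | hc
  · have hb : a1 + a2 = b1 := by linarith
    have hfun : (fun x => x * (a2 * b1 * Real.exp (-(b1 * x))
          * ∫ y in (0:ℝ)..x, y * Real.exp (-((a1 + a2 - b1) * y))))
        = fun x => (a2 * b1 / 2) * (x ^ 3 * Real.exp (-(b1 * x))) := by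
      funext x
      rw [hc]
      simp only [zero_mul, neg_zero, Real.exp_zero, mul_one]
      rw [integral_id]
      ring
    rw [hfun]
    obtain ⟨hi, hv⟩ := int_x3_exp hb1 (le_refl (0:ℝ))
    refine ⟨hi.const_mul _, ?_⟩
    rw [MeasureTheory.integral_const_mul, hv, ← hb]
    simp only [mul_zero, neg_zero, Real.exp_zero]
    field_simp
    ring
  · have hfun : (fun x => x * (a2 * b1 * Real.exp (-(b1 * x))
          * ∫ y in (0:ℝ)..x, y * Real.exp (-((a1 + a2 - b1) * y))))
        = fun x => (a2 * b1 / (a1 + a2 - b1) ^ 2) * (x * Real.exp (-(b1 * x)))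
            - ((a2 * b1 / (a1 + a2 - b1) ^ 2) * (x * Real.exp (-((a1 + a2) * x)))
              + (a2 * b1 / (a1 + a2 - b1)) * (x ^ 2 * Real.exp (-((a1 + a2) * x)))) := by
      funext x
      have hE : Real.exp (-(b1 * x)) * Real.exp (-((a1 + a2 - b1) * x))
          = Real.exp (-((a1 + a2) * x)) := by
        rw [exp_combine]; ring_nf
      rw [K1 hc x, ← hE]
      field_simp
    rw [hfun]
    obtain ⟨hi1, hv1⟩ := int_x_exp hb1 (le_refl (0:ℝ))
    obtain ⟨hi2, hv2⟩ := int_x_exp hs (le_refl (0:ℝ))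
    obtain ⟨hi3, hv3⟩ := int_x2_exp hs (le_refl (0:ℝ))
    have h2 : IntegrableOn (fun x => (a2 * b1 / (a1 + a2 - b1) ^ 2)
        * (x * Real.exp (-((a1 + a2) * x)))) (Set.Ioi 0) volume := hi2.const_mul _
    have h3 : IntegrableOn (fun x => (a2 * b1 / (a1 + a2 - b1))
        * (x ^ 2 * Real.exp (-((a1 + a2) * x)))) (Set.Ioi 0) volume := hi3.const_mul _
    have h23 : IntegrableOn (fun x => (a2 * b1 / (a1 + a2 - b1) ^ 2)
          * (x * Real.exp (-((a1 + a2) * x)))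
        + (a2 * b1 / (a1 + a2 - b1)) * (x ^ 2 * Real.exp (-((a1 + a2) * x))))
        (Set.Ioi 0) volume := h2.add h3
    refine ⟨(hi1.const_mul _).sub h23, ?_⟩
    rw [MeasureTheory.integral_sub (hi1.const_mul _) h23,
      MeasureTheory.integral_add h2 h3,
      MeasureTheory.integral_const_mul, MeasureTheory.integral_const_mul,
      MeasureTheory.integral_const_mul, hv1, hv2, hv3]
    simp only [mul_zero, neg_zero, Real.exp_zero, zero_div, add_zero, mul_one]
    field_simp
    ring

lemma Afull10 (ha1 : 0 < a1) (ha2 : 0 < a2) (hb2 : 0 < b2) :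
    IntegrableOn (fun x => x * (a1 * b2 * Real.exp (-((a1 + a2 - b2) * x))
        * ∫ y in Set.Ioi x, Real.exp (-(b2 * y)))) (Set.Ioi 0) volume ∧
    ∫ x in Set.Ioi (0:ℝ), x * (a1 * b2 * Real.exp (-((a1 + a2 - b2) * x))
        * ∫ y in Set.Ioi x, Real.exp (-(b2 * y)))
      = a1 / (a1 + a2) ^ 2 := by
  have hs : 0 < a1 + a2 := by linarith
  have hEq : Set.EqOn (fun x => a1 * (x * Real.exp (-((a1 + a2) * x))))
      (fun x => x * (a1 * b2 * Real.exp (-((a1 + a2 - b2) * x))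
        * ∫ y in Set.Ioi x, Real.exp (-(b2 * y)))) (Set.Ioi 0) := by
    intro x hx
    simp only
    have hE : Real.exp (-((a1 + a2 - b2) * x)) * Real.exp (-(b2 * x))
        = Real.exp (-((a1 + a2) * x)) := by
      rw [exp_combine]; ring_nf
    rw [(int_exp hb2 (le_of_lt hx)).2, ← hE]
    field_simp
  obtain ⟨hi, hv⟩ := int_x_exp hs (le_refl (0:ℝ))
  have h1 : IntegrableOn (fun x => a1 * (x * Real.exp (-((a1 + a2) * x))))
      (Set.Ioi 0) volume := hi.const_mul a1
  refine ⟨h1.congr_fun hEq measurableSet_Ioi, ?_⟩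
  rw [← setIntegral_congr_fun measurableSet_Ioi hEq, MeasureTheory.integral_const_mul, hv]
  simp only [mul_zero, neg_zero, Real.exp_zero, zero_div, add_zero, mul_one]
  ring

lemma Afull01 (ha1 : 0 < a1) (ha2 : 0 < a2) (hb2 : 0 < b2) :
    IntegrableOn (fun x => a1 * b2 * Real.exp (-((a1 + a2 - b2) * x))
        * ∫ y in Set.Ioi x, y * Real.exp (-(b2 * y))) (Set.Ioi 0) volume ∧
    ∫ x in Set.Ioi (0:ℝ), a1 * b2 * Real.exp (-((a1 + a2 - b2) * x))
        * ∫ y in Set.Ioi x, y * Real.exp (-(b2 * y))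
      = a1 / (a1 + a2) ^ 2 + a1 / (b2 * (a1 + a2)) := by
  have hs : 0 < a1 + a2 := by linarith
  have hEq : Set.EqOn (fun x => (a1 / b2) * Real.exp (-((a1 + a2) * x))
        + a1 * (x * Real.exp (-((a1 + a2) * x))))
      (fun x => a1 * b2 * Real.exp (-((a1 + a2 - b2) * x))
        * ∫ y in Set.Ioi x, y * Real.exp (-(b2 * y))) (Set.Ioi 0) := by
    intro x hx
    simp only
    have hE : Real.exp (-((a1 + a2 - b2) * x)) * Real.exp (-(b2 * x))
        = Real.exp (-((a1 + a2) * x)) := by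
      rw [exp_combine]; ring_nf
    rw [(int_x_exp hb2 (le_of_lt hx)).2, ← hE]
    field_simp
  obtain ⟨hi1, hv1⟩ := int_exp hs (le_refl (0:ℝ))
  obtain ⟨hi2, hv2⟩ := int_x_exp hs (le_refl (0:ℝ))
  have h1 : IntegrableOn (fun x => (a1 / b2) * Real.exp (-((a1 + a2) * x)))
      (Set.Ioi 0) volume := hi1.const_mul _
  have h2 : IntegrableOn (fun x => a1 * (x * Real.exp (-((a1 + a2) * x))))
      (Set.Ioi 0) volume := hi2.const_mul _
  have h12 : IntegrableOn (fun x => (a1 / b2) * Real.exp (-((a1 + a2) * x))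
      + a1 * (x * Real.exp (-((a1 + a2) * x)))) (Set.Ioi 0) volume := h1.add h2
  refine ⟨h12.congr_fun hEq measurableSet_Ioi, ?_⟩
  rw [← setIntegral_congr_fun measurableSet_Ioi hEq,
    MeasureTheory.integral_add h1 h2,
    MeasureTheory.integral_const_mul, MeasureTheory.integral_const_mul, hv1, hv2]
  simp only [mul_zero, neg_zero, Real.exp_zero, zero_div, add_zero, mul_one]
  field_simp
  ring

lemma Afull11 (ha1 : 0 < a1) (ha2 : 0 < a2) (hb2 : 0 < b2) :
    IntegrableOn (fun x => x * (a1 * b2 * Real.exp (-((a1 + a2 - b2) * x))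
        * ∫ y in Set.Ioi x, y * Real.exp (-(b2 * y)))) (Set.Ioi 0) volume ∧
    ∫ x in Set.Ioi (0:ℝ), x * (a1 * b2 * Real.exp (-((a1 + a2 - b2) * x))
        * ∫ y in Set.Ioi x, y * Real.exp (-(b2 * y)))
      = 2 * a1 / (a1 + a2) ^ 3 + a1 / (b2 * (a1 + a2) ^ 2) := by
  have hs : 0 < a1 + a2 := by linarith
  have hEq : Set.EqOn (fun x => (a1 / b2) * (x * Real.exp (-((a1 + a2) * x)))
        + a1 * (x ^ 2 * Real.exp (-((a1 + a2) * x))))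
      (fun x => x * (a1 * b2 * Real.exp (-((a1 + a2 - b2) * x))
        * ∫ y in Set.Ioi x, y * Real.exp (-(b2 * y)))) (Set.Ioi 0) := by
    intro x hx
    simp only
    have hE : Real.exp (-((a1 + a2 - b2) * x)) * Real.exp (-(b2 * x))
        = Real.exp (-((a1 + a2) * x)) := by
      rw [exp_combine]; ring_nf
    rw [(int_x_exp hb2 (le_of_lt hx)).2, ← hE]
    field_simp
  obtain ⟨hi1, hv1⟩ := int_x_exp hs (le_refl (0:ℝ))
  obtain ⟨hi2, hv2⟩ := int_x2_exp hs (le_refl (0:ℝ))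
  have h1 : IntegrableOn (fun x => (a1 / b2) * (x * Real.exp (-((a1 + a2) * x))))
      (Set.Ioi 0) volume := hi1.const_mul _
  have h2 : IntegrableOn (fun x => a1 * (x ^ 2 * Real.exp (-((a1 + a2) * x))))
      (Set.Ioi 0) volume := hi2.const_mul _
  have h12 : IntegrableOn (fun x => (a1 / b2) * (x * Real.exp (-((a1 + a2) * x)))
      + a1 * (x ^ 2 * Real.exp (-((a1 + a2) * x)))) (Set.Ioi 0) volume := h1.add h2
  refine ⟨h12.congr_fun hEq measurableSet_Ioi, ?_⟩
  rw [← setIntegral_congr_fun measurableSet_Ioi hEq,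
    MeasureTheory.integral_add h1 h2,
    MeasureTheory.integral_const_mul, MeasureTheory.integral_const_mul, hv1, hv2]
  simp only [mul_zero, neg_zero, Real.exp_zero, zero_div, add_zero, mul_one]
  field_simp
  ring

lemma E_X (ha1 : 0 < a1) (hb1 : 0 < b1) (ha2 : 0 < a2) (hb2 : 0 < b2) :
    freundE a1 b1 a2 b2 (fun x _ => x)
      = (a2 / (a1 + a2) ^ 2 + a2 / (b1 * (a1 + a2))) + a1 / (a1 + a2) ^ 2 := by
  have hB := Bfull10 ha1 hb1 ha2
  have hA := Afull10 ha1 ha2 hb2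
  unfold freundE
  have hcong : Set.EqOn
      (fun x => ∫ y in Set.Ioi (0:ℝ), (fun x (_ : ℝ) => x) x y * freund a1 b1 a2 b2 x y)
      (fun x => x * (a2 * b1 * Real.exp (-(b1 * x))
          * ∫ y in (0:ℝ)..x, Real.exp (-((a1 + a2 - b1) * y)))
        + x * (a1 * b2 * Real.exp (-((a1 + a2 - b2) * x))
          * ∫ y in Set.Ioi x, Real.exp (-(b2 * y)))) (Set.Ioi 0) := by
    intro x hx
    simp only
    rw [MeasureTheory.integral_const_mul, inner_split0 a1 b1 a2 b2 hb2 hx]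
    ring
  rw [setIntegral_congr_fun measurableSet_Ioi hcong,
    MeasureTheory.integral_add hB.1 hA.1, hB.2, hA.2]

lemma E_Y (ha1 : 0 < a1) (hb1 : 0 < b1) (ha2 : 0 < a2) (hb2 : 0 < b2) :
    freundE a1 b1 a2 b2 (fun _ y => y)
      = a2 / (a1 + a2) ^ 2 + (a1 / (a1 + a2) ^ 2 + a1 / (b2 * (a1 + a2))) := by
  have hB := Bfull01 ha1 hb1 ha2
  have hA := Afull01 ha1 ha2 hb2
  unfold freundE
  have hcong : Set.EqOn
      (fun x => ∫ y in Set.Ioi (0:ℝ), (fun (_ : ℝ) y => y) x y * freund a1 b1 a2 b2 x y)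
      (fun x => (a2 * b1 * Real.exp (-(b1 * x))
          * ∫ y in (0:ℝ)..x, y * Real.exp (-((a1 + a2 - b1) * y)))
        + (a1 * b2 * Real.exp (-((a1 + a2 - b2) * x))
          * ∫ y in Set.Ioi x, y * Real.exp (-(b2 * y)))) (Set.Ioi 0) := by
    intro x hx
    simp only
    rw [inner_split1 a1 b1 a2 b2 hb2 hx]
  rw [setIntegral_congr_fun measurableSet_Ioi hcong,
    MeasureTheory.integral_add hB.1 hA.1, hB.2, hA.2]

lemma E_XY (ha1 : 0 < a1) (hb1 : 0 < b1) (ha2 : 0 < a2) (hb2 : 0 < b2) :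
    freundE a1 b1 a2 b2 (fun x y => x * y)
      = (2 * a2 / (a1 + a2) ^ 3 + a2 / (b1 * (a1 + a2) ^ 2))
        + (2 * a1 / (a1 + a2) ^ 3 + a1 / (b2 * (a1 + a2) ^ 2)) := by
  have hB := Bfull11 ha1 hb1 ha2
  have hA := Afull11 ha1 ha2 hb2
  unfold freundE
  have hcong : Set.EqOn
      (fun x => ∫ y in Set.Ioi (0:ℝ), (fun x y => x * y) x y * freund a1 b1 a2 b2 x y)
      (fun x => x * (a2 * b1 * Real.exp (-(b1 * x))
          * ∫ y in (0:ℝ)..x, y * Real.exp (-((a1 + a2 - b1) * y)))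
        + x * (a1 * b2 * Real.exp (-((a1 + a2 - b2) * x))
          * ∫ y in Set.Ioi x, y * Real.exp (-(b2 * y)))) (Set.Ioi 0) := by
    intro x hx
    simp only
    simp_rw [mul_assoc]
    rw [MeasureTheory.integral_const_mul, inner_split1 a1 b1 a2 b2 hb2 hx]
    ring
  rw [setIntegral_congr_fun measurableSet_Ioi hcong,
    MeasureTheory.integral_add hB.1 hA.1, hB.2, hA.2]

end Outer

theorem freund_covariance (a1 b1 a2 b2 : ℝ)
    (ha1 : 0 < a1) (hb1 : 0 < b1) (ha2 : 0 < a2) (hb2 : 0 < b2) :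
    freundE a1 b1 a2 b2 (fun x y => x * y) -
      freundE a1 b1 a2 b2 (fun x _ => x) * freundE a1 b1 a2 b2 (fun _ y => y) =
    (b1 * b2 - a1 * a2) / (b1 * b2 * (a1 + a2) ^ 2) := by
  rw [E_XY ha1 hb1 ha2 hb2, E_X ha1 hb1 ha2 hb2, E_Y ha1 hb1 ha2 hb2]
  have hs : 0 < a1 + a2 := by linarith
  field_simp
  ring
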